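/- Jensen-type bound: for any θ > 0 and any integrable nonnegative random service rate R, the maximum average arrival rate of the random-service link is at most that of a constant-rate link with the same mean: ρ_r(θ) ≤ ρ_v-formula evaluated at V = E[R]. Concretely, with χ = E[e^{−θR}] and χ̄ = e^{−θE[R]}, we have χ ≥ χ̄, and the map χ ↦ log( (1−(1-β)χ)/((1-α)χ − (1−α−β)χ²) ) is nonincreasing in χ on the domain where the argument is ≥ 1; hence ρ_r(θ) ≤ (β/((α+β)θ))·log( (1−(1-β)χ̄)/((1-α)χ̄ − (1−α−β)χ̄²) ). -/
import Mathlib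


open MeasureTheory

lemma g_strictAnti (α β : ℝ) (hα : 0 < α) (hα1 : α < 1) (hβ : 0 < β) (hβ1 : β < 1) :
    StrictAntiOn (fun x : ℝ =>
      (1 - (1 - β) * x) / ((1 - α) * x - (1 - α - β) * x ^ 2)) (Set.Ioo 0 1) := by
  intro x hx y hy hxy
  obtain ⟨hx0, hx1⟩ := hx
  obtain ⟨hy0, hy1⟩ := hy
  have hDx : 0 < (1 - α) * x - (1 - α - β) * x ^ 2 := by
    nlinarith [mul_pos (mul_pos hx0 (sub_pos.2 hx1)) (show (0:ℝ) < 1 - α by linarith),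
      mul_pos (mul_pos hx0 hx0) hβ]
  have hDy : 0 < (1 - α) * y - (1 - α - β) * y ^ 2 := by
    nlinarith [mul_pos (mul_pos hy0 (sub_pos.2 hy1)) (show (0:ℝ) < 1 - α by linarith),
      mul_pos (mul_pos hy0 hy0) hβ]
  rw [div_lt_div_iff₀ hDy hDx]
  have hB : 0 < (1 - α) - (1 - α - β) * (x + y - (1 - β) * x * y) := by
    rcases le_or_gt (1 - α - β) 0 with hc | hc
    · have ht : 0 < x + y - (1 - β) * x * y := by
        nlinarith [mul_pos hy0 (show (0:ℝ) < 1 - (1 - β) * x by nlinarith [mul_pos hβ hx0])]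
      nlinarith [mul_nonneg (neg_nonneg.2 hc) ht.le]
    · have h1 : 0 < (1 - y) * (1 - (1 - β) * x) := by
        have : 0 < 1 - (1 - β) * x := by nlinarith [mul_pos hβ hx0]
        exact mul_pos (by linarith) this
      have h2 : 0 < 1 - (1 - α - β) * x := by
        nlinarith [mul_pos (show (0:ℝ) < 1 - (1 - α - β) by linarith) hx0]
      nlinarith [mul_pos hc h1, mul_pos hβ h2]
  nlinarith [mul_pos (sub_pos.2 hxy) hB]

/-- Jensen-type bound: with χ = E[e^{−θR}] and χ̄ = e^{−θE[R]} one has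
χ̄ ≤ χ; the map g(x) = (1−(1-β)x)/((1-α)x − (1−α−β)x²) is strictly
decreasing on (0,1); hence the maximum average arrival rate of the random
service link is at most that of a constant-rate link with the same mean:
ρ_r(θ) = (β/((α+β)θ))·log g(χ) ≤ (β/((α+β)θ))·log g(χ̄). -/
theorem jensen_bound_rho
    {Ω : Type*} [MeasurableSpace Ω] (μ : Measure Ω) [IsProbabilityMeasure μ]
    (R : Ω → ℝ) (hmeas : Measurable R) (hR0 : ∀ᵐ ω ∂μ, 0 ≤ R ω)
    (hRint : Integrable R μ) (α β θ : ℝ)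
    (hα : 0 < α) (hα1 : α < 1) (hβ : 0 < β) (hβ1 : β < 1) (hθ : 0 < θ)
    (hint : Integrable (fun ω => Real.exp (-θ * R ω)) μ)
    (hχlt : (∫ ω, Real.exp (-θ * R ω) ∂μ) < 1) :
    let g : ℝ → ℝ := fun x =>
      (1 - (1 - β) * x) / ((1 - α) * x - (1 - α - β) * x ^ 2)
    let χ : ℝ := ∫ ω, Real.exp (-θ * R ω) ∂μ
    let χbar : ℝ := Real.exp (-θ * ∫ ω, R ω ∂μ)
    χbar ≤ χ ∧ StrictAntiOn g (Set.Ioo 0 1) ∧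
      (β / ((α + β) * θ)) * Real.log (g χ)
        ≤ (β / ((α + β) * θ)) * Real.log (g χbar) := by
  intro g χ χbar
  have hf : Integrable (fun ω => -θ * R ω) μ := hRint.const_mul _
  have hjensen : χbar ≤ χ := by
    have := convexOn_exp.map_integral_le (μ := μ) (f := fun ω => -θ * R ω)
      Real.continuous_exp.continuousOn isClosed_univ
      (Filter.Eventually.of_forall fun ω => Set.mem_univ _) hf hint
    simpa [χbar, χ, Function.comp, integral_neg, integral_const_mul] using this
  refine ⟨hjensen, g_strictAnti α β hα hα1 hβ hβ1, ?_⟩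
  have hbar0 : 0 < χbar := Real.exp_pos _
  have hχ1 : χ < 1 := hχlt
  have hbar1 : χbar < 1 := lt_of_le_of_lt hjensen hχ1
  have hχ0 : 0 < χ := lt_of_lt_of_le hbar0 hjensen
  have hanti := g_strictAnti α β hα hα1 hβ hβ1
  have hgg : g χ ≤ g χbar := by
    rcases eq_or_lt_of_le hjensen with h | h
    · rw [h]
    · exact le_of_lt (hanti ⟨hbar0, hbar1⟩ ⟨hχ0, hχ1⟩ h)
  have hDχ : 0 < (1 - α) * χ - (1 - α - β) * χ ^ 2 := by
    nlinarith [mul_pos (mul_pos hχ0 (show (0:ℝ) < 1 - χ by linarith)) (show (0:ℝ) < 1 - α by linarith),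
      mul_pos (mul_pos hχ0 hχ0) hβ]
  have hNχ : 0 < 1 - (1 - β) * χ := by nlinarith
  have hgχ : 0 < g χ := div_pos hNχ hDχ
  have hlog : Real.log (g χ) ≤ Real.log (g χbar) :=
    Real.log_le_log hgχ hgg
  have hc : 0 ≤ β / ((α + β) * θ) :=
    div_nonneg hβ.le (mul_nonneg (by linarith) hθ.le)
  exact mul_le_mul_of_nonneg_left hlog hc
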